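/- arXiv:1706.08014 — 5 statements merged into one kernel-verified Lean document; each statement's English description precedes it below -/
import Mathlib

section
/- Let β ≥ 1 be a real number and let S ⊆ ℂ be a Borel set. The following are equivalent: (i) there exists b > 0 such that the set S ∖ 𝒫^β_b is bounded; (ii) every finite positive Borel measure ν on ℂ with ν(ℂ ∖ S) = 0 that has all exponential moments satisfies ∫_ℂ e^(s·|λ|^(1/β)) · e^(t·Re λ) dν(λ) < ∞ for all s > 0 and all t ≥ 0. -/
open MeasureTheory


open scoped ENNReal

lemma my_rpow_add_le {x y p : ℝ} (hx : 0 ≤ x) (hy : 0 ≤ y) (hp : 0 ≤ p) (hp1 : p ≤ 1) :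
    (x + y) ^ p ≤ x ^ p + y ^ p := by
  lift x to NNReal using hx
  lift y to NNReal using hy
  rw [← NNReal.coe_add, ← NNReal.coe_rpow, ← NNReal.coe_rpow, ← NNReal.coe_rpow,
    ← NNReal.coe_add, NNReal.coe_le_coe]
  exact NNReal.rpow_add_le_add_rpow x y hp hp1

lemma my_summable {t : ℝ} (ht : 0 ≤ t) {a r : ℕ → ℝ}
    (ha : ∀ n : ℕ, (n : ℝ) + 1 ≤ a n) (hr : ∀ n : ℕ, ((n : ℝ) + 1) * r n ≤ a n) :
    Summable fun n => Real.exp (t * r n - a n) := by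
  obtain ⟨N, hN⟩ := exists_nat_ge (2 * t)
  rw [← summable_nat_add_iff N]
  have hgeo : Summable fun n : ℕ => Real.exp ((n : ℝ) * (-1 / 2)) :=
    Real.summable_exp_nat_mul_iff.mpr (by norm_num)
  refine hgeo.of_nonneg_of_le (fun n => (Real.exp_pos _).le) (fun n => ?_)
  set m := n + N with hm
  apply Real.exp_le_exp.mpr
  have ham := ha m
  have hrm := hr m
  have hmn : (n : ℝ) ≤ (m : ℝ) := by
    push_cast [hm]; linarith [Nat.cast_nonneg (α := ℝ) N]
  have hNm : (N : ℝ) ≤ (m : ℝ) + 1 := by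
    push_cast [hm]; linarith [Nat.cast_nonneg (α := ℝ) n]
  have htr : t * r m ≤ a m / 2 := by
    rcases le_or_gt (r m) 0 with h | h
    · nlinarith
    · nlinarith
  nlinarith

/-- For `β ≥ 1` and a Borel set `S ⊆ ℂ`, the following are equivalent:
(i) there is `b > 0` such that `S \ 𝒫^β_b` is bounded, where
`𝒫^β_b = {λ : Re λ ≥ b·|Im λ|^(1/β)}`;
(ii) every finite positive Borel measure `ν` carried by `S` with all exponential
moments satisfies `∫ e^(s|λ|^(1/β)) e^(t·Re λ) dν < ∞` for all `s > 0`, `t ≥ 0`. -/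
theorem stmt_0 (β : ℝ) (hβ : 1 ≤ β) (S : Set ℂ) (hS : MeasurableSet S) :
    (∃ b > (0 : ℝ),
        Bornology.IsBounded (S \ {z : ℂ | b * |z.im| ^ (1 / β) ≤ z.re})) ↔
    (∀ ν : Measure ℂ, IsFiniteMeasure ν → ν Sᶜ = 0 →
      (∀ t : ℝ, 0 ≤ t → ∫⁻ z, ENNReal.ofReal (Real.exp (t * z.re)) ∂ν < ⊤) →
      ∀ s > (0 : ℝ), ∀ t ≥ (0 : ℝ),
        ∫⁻ z, ENNReal.ofReal
          (Real.exp (s * ‖z‖ ^ (1 / β)) * Real.exp (t * z.re)) ∂ν < ⊤) := by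
  constructor
  · rintro ⟨b, hb, hbd⟩ ν hfin hnull hmom s hs t ht
    have hβ0 : (0 : ℝ) < β := lt_of_lt_of_le one_pos hβ
    have hβi0 : (0 : ℝ) ≤ 1 / β := by positivity
    have hβi1 : 1 / β ≤ 1 := by
      rw [div_le_one hβ0]; exact hβ
    obtain ⟨C, hC⟩ := isBounded_iff_forall_norm_le.mp hbd
    set R : ℝ := max 1 C with hR
    have hR1 : (1 : ℝ) ≤ R := le_max_left _ _
    set t' : ℝ := t + s * (1 + 1 / b) with ht'
    have ht'0 : 0 ≤ t' := by rw [ht']; positivity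
    set K : ℝ := Real.exp (s * R + t * R) with hK
    -- pointwise bound
    have hpt : ∀ z ∈ S, ENNReal.ofReal
        (Real.exp (s * ‖z‖ ^ (1 / β)) * Real.exp (t * z.re)) ≤
        ENNReal.ofReal K + ENNReal.ofReal (Real.exp s) * ENNReal.ofReal (Real.exp (t' * z.re)) := by
      intro z hzS
      by_cases hz : b * |z.im| ^ (1 / β) ≤ z.re
      · -- parabola region
        have hre0 : 0 ≤ z.re := le_trans (by positivity) hz
        have him : |z.im| ≤ (z.re / b) ^ β := by
          have h1 : |z.im| ^ (1 / β) ≤ z.re / b := by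
            rw [le_div_iff₀ hb]; linarith [hz]
          calc |z.im| = (|z.im| ^ (1 / β)) ^ β := by
                rw [← Real.rpow_mul (abs_nonneg _), one_div_mul_cancel hβ0.ne', Real.rpow_one]
            _ ≤ (z.re / b) ^ β := Real.rpow_le_rpow (Real.rpow_nonneg (abs_nonneg _) _) h1 hβ0.le
        have habs : ‖z‖ ≤ z.re + (z.re / b) ^ β := by
          have := Complex.norm_le_abs_re_add_abs_im z
          rw [abs_of_nonneg hre0] at this
          linarith
        have h4 : ‖z‖ ^ (1 / β) ≤ z.re ^ (1 / β) + z.re / b := by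
          calc ‖z‖ ^ (1 / β) ≤ (z.re + (z.re / b) ^ β) ^ (1 / β) :=
                Real.rpow_le_rpow ((norm_nonneg z)) habs hβi0
            _ ≤ z.re ^ (1 / β) + ((z.re / b) ^ β) ^ (1 / β) :=
                my_rpow_add_le hre0 (Real.rpow_nonneg (by positivity) _) hβi0 hβi1
            _ = z.re ^ (1 / β) + z.re / b := by
                rw [← Real.rpow_mul (by positivity), mul_one_div, div_self hβ0.ne', Real.rpow_one]
        have h5 : z.re ^ (1 / β) ≤ 1 + z.re := by
          rcases le_total z.re 1 with h | h
          · have := Real.rpow_le_one hre0 h hβi0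
            linarith
          · have := Real.rpow_le_rpow_of_exponent_le h hβi1
            rw [Real.rpow_one] at this
            linarith
        have hexp : s * ‖z‖ ^ (1 / β) + t * z.re ≤ s + t' * z.re := by
          have h6 : ‖z‖ ^ (1 / β) ≤ 1 + (1 + 1 / b) * z.re := by
            have : z.re / b = (1 / b) * z.re := by ring
            linarith [h4, h5]
          have h7 : s * ‖z‖ ^ (1 / β) ≤ s * (1 + (1 + 1 / b) * z.re) :=
            mul_le_mul_of_nonneg_left h6 hs.le
          rw [ht']; nlinarith
        refine le_trans ?_ (le_add_self)
        rw [← ENNReal.ofReal_mul (Real.exp_nonneg _), ← Real.exp_add, ← Real.exp_add]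
        exact ENNReal.ofReal_le_ofReal (Real.exp_le_exp.mpr hexp)
      · -- bounded region
        have hzmem : z ∈ S \ {z : ℂ | b * |z.im| ^ (1 / β) ≤ z.re} := ⟨hzS, hz⟩
        have hnorm : ‖z‖ ≤ R := by
          have := hC z hzmem
          exact this.trans (le_max_right _ _)
        have habs1 : ‖z‖ ^ (1 / β) ≤ R := by
          calc ‖z‖ ^ (1 / β) ≤ R ^ (1 / β) :=
                Real.rpow_le_rpow ((norm_nonneg z)) hnorm hβi0
            _ ≤ R ^ (1 : ℝ) := Real.rpow_le_rpow_of_exponent_le hR1 hβi1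
            _ = R := Real.rpow_one R
        have hre : z.re ≤ R := (Complex.re_le_norm z).trans hnorm
        refine le_trans ?_ (self_le_add_right _ _)
        rw [hK, ← Real.exp_add]
        apply ENNReal.ofReal_le_ofReal
        apply Real.exp_le_exp.mpr
        have := mul_le_mul_of_nonneg_left habs1 hs.le
        have := mul_le_mul_of_nonneg_left hre ht
        linarith
    -- integrate
    have hae : ∀ᵐ z ∂ν, z ∈ S := mem_ae_iff.mpr hnull
    have hmeas : Measurable fun z : ℂ => ENNReal.ofReal (Real.exp (t' * z.re)) :=
      (Real.continuous_exp.comp (continuous_const.mul Complex.continuous_re)).measurable.ennreal_ofReal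
    calc ∫⁻ z, ENNReal.ofReal
          (Real.exp (s * ‖z‖ ^ (1 / β)) * Real.exp (t * z.re)) ∂ν
        ≤ ∫⁻ z, (ENNReal.ofReal K + ENNReal.ofReal (Real.exp s) *
            ENNReal.ofReal (Real.exp (t' * z.re))) ∂ν :=
          lintegral_mono_ae (hae.mono fun z hz => hpt z hz)
      _ = ENNReal.ofReal K * ν Set.univ + ENNReal.ofReal (Real.exp s) *
            ∫⁻ z, ENNReal.ofReal (Real.exp (t' * z.re)) ∂ν := by
          rw [lintegral_add_left measurable_const, lintegral_const, lintegral_const_mul _ hmeas]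
      _ < ⊤ := by
          apply ENNReal.add_lt_top.mpr
          constructor
          · exact ENNReal.mul_lt_top ENNReal.ofReal_lt_top (measure_lt_top ν _)
          · exact ENNReal.mul_lt_top ENNReal.ofReal_lt_top (hmom t' ht'0)
  · intro h
    have hβ0 : (0 : ℝ) < β := lt_of_lt_of_le one_pos hβ
    have hβi0 : (0 : ℝ) ≤ 1 / β := by positivity
    by_contra hcon
    push_neg at hcon
    -- choose the sequence
    have hsel : ∀ n : ℕ, ∃ z : ℂ, z ∈ S ∧
        ¬((1 : ℝ) / ((n : ℝ) + 1) * |z.im| ^ (1 / β) ≤ z.re) ∧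
        ((n : ℝ) + 1) ^ β < ‖z‖ := by
      intro n
      have hbpos : (0 : ℝ) < 1 / ((n : ℝ) + 1) := by positivity
      have hnb := hcon (1 / ((n : ℝ) + 1)) hbpos
      rw [isBounded_iff_forall_norm_le] at hnb
      push_neg at hnb
      obtain ⟨z, hzmem, hznorm⟩ := hnb (((n : ℝ) + 1) ^ β)
      exact ⟨z, hzmem.1, hzmem.2, by exact hznorm⟩
    choose lam hlamS hlamP hlamAbs using hsel
    set a : ℕ → ℝ := fun n => ‖lam n‖ ^ (1 / β) with ha_def
    have ha : ∀ n : ℕ, (n : ℝ) + 1 ≤ a n := by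
      intro n
      have h1 : (((n : ℝ) + 1) ^ β) ^ (1 / β) ≤ a n :=
        Real.rpow_le_rpow (Real.rpow_nonneg (by positivity) _) (hlamAbs n).le hβi0
      rwa [← Real.rpow_mul (by positivity), mul_one_div, div_self hβ0.ne', Real.rpow_one] at h1
    have hr : ∀ n : ℕ, ((n : ℝ) + 1) * (lam n).re ≤ a n := by
      intro n
      have h1 : (lam n).re < 1 / ((n : ℝ) + 1) * |(lam n).im| ^ (1 / β) :=
        lt_of_not_ge (hlamP n)
      have h2 : |(lam n).im| ^ (1 / β) ≤ a n :=
        Real.rpow_le_rpow (abs_nonneg _) (Complex.abs_im_le_norm _) hβi0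
      have h3 : (0 : ℝ) < (n : ℝ) + 1 := by positivity
      rw [div_mul_eq_mul_div, one_mul] at h1
      have := (lt_div_iff₀' h3).mp h1
      linarith
    -- the measure
    set ν : Measure ℂ := Measure.sum
        (fun n => ENNReal.ofReal (Real.exp (-(a n))) • Measure.dirac (lam n)) with hν
    have hlint : ∀ f : ℂ → ℝ≥0∞,
        ∫⁻ z, f z ∂ν = ∑' n, ENNReal.ofReal (Real.exp (-(a n))) * f (lam n) := by
      intro f
      rw [hν, lintegral_sum_measure]
      congr 1
      ext n
      rw [lintegral_smul_measure, lintegral_dirac, smul_eq_mul]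
    -- the moments
    have hmom : ∀ t : ℝ, 0 ≤ t → ∫⁻ z, ENNReal.ofReal (Real.exp (t * z.re)) ∂ν < ⊤ := by
      intro t ht
      rw [hlint]
      have heq : ∀ n : ℕ, ENNReal.ofReal (Real.exp (-(a n))) *
          ENNReal.ofReal (Real.exp (t * (lam n).re)) =
          ENNReal.ofReal (Real.exp (t * (lam n).re - a n)) := by
        intro n
        rw [← ENNReal.ofReal_mul (Real.exp_nonneg _), ← Real.exp_add]
        ring_nf
      simp_rw [heq]
      rw [← ENNReal.ofReal_tsum_of_nonneg (fun n => (Real.exp_pos _).le) (my_summable ht ha hr)]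
      exact ENNReal.ofReal_lt_top
    have hfin : IsFiniteMeasure ν := by
      constructor
      have : ν Set.univ = ∫⁻ z, (1 : ℝ≥0∞) ∂ν := by rw [lintegral_one]
      rw [this]
      have h0 := hmom 0 le_rfl
      simp only [zero_mul, Real.exp_zero, ENNReal.ofReal_one] at h0
      exact h0
    have hnull : ν Sᶜ = 0 := by
      rw [hν, Measure.sum_apply _ hS.compl]
      apply ENNReal.tsum_eq_zero.mpr
      intro n
      rw [Measure.smul_apply, Measure.dirac_apply' _ hS.compl,
        Set.indicator_of_notMem (by simp [hlamS n]), smul_zero]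
    have hbad := h ν hfin hnull hmom 1 one_pos 0 le_rfl
    rw [hlint] at hbad
    have heq : ∀ n : ℕ, ENNReal.ofReal (Real.exp (-(a n))) *
        ENNReal.ofReal (Real.exp (1 * ‖lam n‖ ^ (1 / β)) *
          Real.exp (0 * (lam n).re)) = 1 := by
      intro n
      rw [← ENNReal.ofReal_mul (Real.exp_nonneg _), ← Real.exp_add, ← Real.exp_add]
      norm_num
      simp [ha_def, one_div]
    simp_rw [heq] at hbad
    rw [ENNReal.tsum_const_eq_top_of_ne_zero one_ne_zero] at hbad
    exact absurd hbad (lt_irrefl ⊤)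
end

section
/- Let S ⊆ ℂ be a Borel set. The following are equivalent: (i) there exists b > 0 such that the set S ∖ {λ ∈ ℂ : Re λ ≥ b·|Im λ|} is bounded; (ii) every finite positive Borel measure ν on ℂ with ν(ℂ ∖ S) = 0 that has all exponential moments satisfies ∫_ℂ e^(s·|λ|) · e^(t·Re λ) dν(λ) < ∞ for all s > 0 and all t ≥ 0. -/
open MeasureTheory ENNReal

private lemma summable_exp_aux (f : ℕ → ℝ) (N : ℕ) (h : ∀ n, N ≤ n → f n ≤ -(n : ℝ) / 2) :
    Summable fun n => Real.exp (f n) := by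
  rw [← summable_nat_add_iff N]
  have hg : Summable fun n : ℕ => Real.exp (-(1 : ℝ) / 2) ^ n :=
    summable_geometric_of_lt_one (Real.exp_pos _).le (Real.exp_lt_one_iff.2 (by norm_num))
  refine Summable.of_nonneg_of_le (fun n => (Real.exp_pos _).le) (fun n => ?_) hg
  have h1 : f (n + N) ≤ -((n : ℝ)) / 2 := by
    refine (h (n + N) (Nat.le_add_left _ _)).trans ?_
    have : (n : ℝ) ≤ ((n + N : ℕ) : ℝ) := by exact_mod_cast Nat.le_add_right n N
    linarith
  calc Real.exp (f (n + N)) ≤ Real.exp (-(n : ℝ) / 2) := Real.exp_le_exp.2 h1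
    _ = Real.exp (-(1 : ℝ) / 2) ^ n := by
        rw [← Real.exp_nat_mul]; ring_nf

/-- For a Borel set `S ⊆ ℂ`, the following are equivalent:
(i) there is `b > 0` such that `S \ {λ : Re λ ≥ b·|Im λ|}` is bounded;
(ii) every finite positive Borel measure `ν` carried by `S` with all exponential
moments satisfies `∫ e^(s|λ|) e^(t·Re λ) dν < ∞` for all `s > 0`, `t ≥ 0`. -/
theorem stmt_1 (S : Set ℂ) (hS : MeasurableSet S) :
    (∃ b > (0 : ℝ), Bornology.IsBounded (S \ {z : ℂ | b * |z.im| ≤ z.re})) ↔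
    (∀ ν : Measure ℂ, IsFiniteMeasure ν → ν Sᶜ = 0 →
      (∀ t : ℝ, 0 ≤ t → ∫⁻ z, ENNReal.ofReal (Real.exp (t * z.re)) ∂ν < ⊤) →
      ∀ s > (0 : ℝ), ∀ t ≥ (0 : ℝ),
        ∫⁻ z, ENNReal.ofReal
          (Real.exp (s * ‖z‖) * Real.exp (t * z.re)) ∂ν < ⊤) := by
  constructor
  · rintro ⟨b, hb, hbd⟩ ν hfin hnull hmom s hs t ht
    obtain ⟨R, hR⟩ := hbd.subset_closedBall 0
    set c := Real.sqrt (1 + b⁻¹ ^ 2) with hc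
    have hc0 : 0 ≤ c := Real.sqrt_nonneg _
    have haeS : ∀ᵐ z ∂ν, z ∈ S := by
      rw [MeasureTheory.ae_iff]
      exact hnull
    have key : ∀ᵐ z ∂ν,
        ENNReal.ofReal (Real.exp (s * ‖z‖) * Real.exp (t * z.re)) ≤
        ENNReal.ofReal (Real.exp (s * |R| + t * |R|)) +
          ENNReal.ofReal (Real.exp ((s * c + t) * z.re)) := by
      filter_upwards [haeS] with z hz
      by_cases hsec : b * |z.im| ≤ z.re
      · -- in the sector : |z| ≤ c * z.re
        have hre : 0 ≤ z.re := le_trans (by positivity) hsec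
        have him : |z.im| ≤ b⁻¹ * z.re := by
          rw [inv_mul_eq_div]
          exact (le_div_iff₀' hb).2 hsec
        have h0 : 0 ≤ b⁻¹ * z.re := le_trans (abs_nonneg _) him
        have himsq : z.im * z.im ≤ (b⁻¹ * z.re) ^ 2 := by
          nlinarith [mul_self_le_mul_self (abs_nonneg z.im) him, abs_mul_abs_self z.im]
        have habs : ‖z‖ ≤ c * z.re := by
          have h1 : ‖z‖ ≤ Real.sqrt (z.re ^ 2 + (b⁻¹ * z.re) ^ 2) := by
            rw [Complex.norm_def, Complex.normSq_apply]
            apply Real.sqrt_le_sqrt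
            nlinarith [himsq]
          have h2 : c * z.re = Real.sqrt (z.re ^ 2 + (b⁻¹ * z.re) ^ 2) := by
            rw [hc, ← Real.sqrt_sq hre, ← Real.sqrt_mul (by positivity) (z.re ^ 2)]
            rw [Real.sqrt_sq hre, ← Real.sqrt_sq hre]
            congr 1
            ring
          rw [h2]
          exact h1
        refine le_trans ?_ le_add_self
        apply ENNReal.ofReal_le_ofReal
        rw [← Real.exp_add]
        apply Real.exp_le_exp.2
        have hmul : s * ‖z‖ ≤ s * (c * z.re) :=
          mul_le_mul_of_nonneg_left habs hs.le
        nlinarith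
      · -- outside the sector : z is in the bounded part
        have hzB : z ∈ Metric.closedBall (0 : ℂ) R := hR ⟨hz, hsec⟩
        have hzR : ‖z‖ ≤ |R| := by
          have := Metric.mem_closedBall.1 hzB
          rw [Complex.dist_eq, sub_zero] at this
          exact this.trans (le_abs_self R)
        refine le_trans ?_ (le_add_of_nonneg_right zero_le)
        apply ENNReal.ofReal_le_ofReal
        rw [← Real.exp_add]
        apply Real.exp_le_exp.2
        have hre : z.re ≤ |R| := (Complex.re_le_norm z).trans hzR
        have h1 : s * ‖z‖ ≤ s * |R| := mul_le_mul_of_nonneg_left hzR hs.le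
        have h2 : t * z.re ≤ t * |R| := mul_le_mul_of_nonneg_left hre ht
        linarith
    calc ∫⁻ z, ENNReal.ofReal (Real.exp (s * ‖z‖) * Real.exp (t * z.re)) ∂ν
        ≤ ∫⁻ z, (ENNReal.ofReal (Real.exp (s * |R| + t * |R|)) +
            ENNReal.ofReal (Real.exp ((s * c + t) * z.re))) ∂ν := lintegral_mono_ae key
      _ = ENNReal.ofReal (Real.exp (s * |R| + t * |R|)) * ν Set.univ +
            ∫⁻ z, ENNReal.ofReal (Real.exp ((s * c + t) * z.re)) ∂ν := by
          rw [lintegral_add_left measurable_const, lintegral_const]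
      _ < ⊤ := by
          apply ENNReal.add_lt_top.2
          refine ⟨?_, hmom (s * c + t) (by positivity)⟩
          exact ENNReal.mul_lt_top ENNReal.ofReal_lt_top (measure_lt_top ν _)
  · intro H
    by_contra hnot
    push_neg at hnot
    have hz : ∀ n : ℕ, ∃ w : ℂ, w ∈ S ∧ w.re < ((n : ℝ) + 1)⁻¹ * |w.im| ∧
        (n : ℝ) + 1 < ‖w‖ := by
      intro n
      have hpos : (0 : ℝ) < ((n : ℝ) + 1)⁻¹ := by positivity
      have hub := hnot (((n : ℝ) + 1)⁻¹) hpos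
      by_contra hcon
      push_neg at hcon
      apply hub
      apply (Metric.isBounded_closedBall (x := (0 : ℂ)) (r := (n : ℝ) + 1)).subset
      rintro w ⟨hwS, hwsec⟩
      have hwlt : w.re < ((n : ℝ) + 1)⁻¹ * |w.im| := lt_of_not_ge hwsec
      have := hcon w hwS hwlt
      simpa [Metric.mem_closedBall, Complex.dist_eq] using this
    choose z hzS hzsec hzabs using hz
    set w : ℕ → ℝ≥0∞ := fun n => ENNReal.ofReal (Real.exp (-‖z n‖)) with hw
    set ν : Measure ℂ := Measure.sum (fun n => w n • Measure.dirac (z n)) with hν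
    have hint : ∀ f : ℂ → ℝ≥0∞, ∫⁻ x, f x ∂ν = ∑' n, w n * f (z n) := by
      intro f
      rw [hν, lintegral_sum_measure]
      exact tsum_congr fun n => by rw [lintegral_smul_measure, lintegral_dirac, smul_eq_mul]
    have habs_n : ∀ n : ℕ, (n : ℝ) + 1 ≤ ‖z n‖ := fun n => (hzabs n).le
    have hfin : IsFiniteMeasure ν := by
      constructor
      rw [← lintegral_one, hint]
      have hsum : Summable fun n => Real.exp (-‖z n‖) := by
        apply summable_exp_aux _ 0
        intro n _
        have := habs_n n
        have hn0 : (0 : ℝ) ≤ (n : ℝ) := Nat.cast_nonneg n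
        linarith
      calc ∑' n, w n * 1 = ∑' n, ENNReal.ofReal (Real.exp (-‖z n‖)) := by
            simp [hw]
        _ = ENNReal.ofReal (∑' n, Real.exp (-‖z n‖)) :=
            (ENNReal.ofReal_tsum_of_nonneg (fun n => (Real.exp_pos _).le) hsum).symm
        _ < ⊤ := ENNReal.ofReal_lt_top
    have hnullS : ν Sᶜ = 0 := by
      rw [hν, Measure.sum_apply _ hS.compl]
      have hd : ∀ n : ℕ, (w n • Measure.dirac (z n)) Sᶜ = 0 := by
        intro n
        rw [Measure.smul_apply, Measure.dirac_apply]
        simp [Set.indicator_of_notMem, hzS n]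
      simp [hd]
    have hmom : ∀ t : ℝ, 0 ≤ t → ∫⁻ x, ENNReal.ofReal (Real.exp (t * x.re)) ∂ν < ⊤ := by
      intro t ht
      rw [hint]
      have hsum : Summable fun n => Real.exp (t * (z n).re - ‖z n‖) := by
        apply summable_exp_aux _ ⌈2 * t⌉₊
        intro n hn
        have h2t : 2 * t ≤ (n : ℝ) := le_trans (Nat.le_ceil _) (by exact_mod_cast hn)
        have habs := habs_n n
        have habs0 : (0 : ℝ) < ‖z n‖ := lt_of_lt_of_le (by positivity) habs
        by_cases hre : (z n).re ≤ 0
        · have : t * (z n).re ≤ 0 := mul_nonpos_of_nonneg_of_nonpos ht hre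
          have hn0 : (0 : ℝ) ≤ (n : ℝ) := Nat.cast_nonneg n
          linarith
        · push_neg at hre
          have h1 : (z n).re ≤ ‖z n‖ / ((n : ℝ) + 1) := by
            have him : |(z n).im| ≤ ‖z n‖ := Complex.abs_im_le_norm _
            have hsec := hzsec n
            have hpos : (0 : ℝ) < (n : ℝ) + 1 := by positivity
            rw [le_div_iff₀ hpos]
            calc (z n).re * ((n : ℝ) + 1)
                ≤ (((n : ℝ) + 1)⁻¹ * |(z n).im|) * ((n : ℝ) + 1) :=
                  mul_le_mul_of_nonneg_right hsec.le hpos.le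
              _ = |(z n).im| := by field_simp
              _ ≤ ‖z n‖ := him
          have h2 : t * (z n).re ≤ ‖z n‖ / 2 := by
            calc t * (z n).re ≤ t * (‖z n‖ / ((n : ℝ) + 1)) :=
                  mul_le_mul_of_nonneg_left h1 ht
              _ ≤ ((n : ℝ) / 2) * (‖z n‖ / ((n : ℝ) + 1)) :=
                  mul_le_mul_of_nonneg_right (by linarith) (by positivity)
              _ ≤ ‖z n‖ / 2 := by
                  rw [div_mul_div_comm, div_le_div_iff₀ (by positivity) (by norm_num)]
                  nlinarith [habs0.le]
          linarith
      calc ∑' n, w n * ENNReal.ofReal (Real.exp (t * (z n).re))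
          = ∑' n, ENNReal.ofReal (Real.exp (t * (z n).re - ‖z n‖)) := by
            refine tsum_congr fun n => ?_
            simp only [hw]
            rw [← ENNReal.ofReal_mul (Real.exp_pos _).le, ← Real.exp_add]
            congr 2
            ring
        _ = ENNReal.ofReal (∑' n, Real.exp (t * (z n).re - ‖z n‖)) :=
            (ENNReal.ofReal_tsum_of_nonneg (fun n => (Real.exp_pos _).le) hsum).symm
        _ < ⊤ := ENNReal.ofReal_lt_top
    have hdiv := H ν hfin hnullS hmom 1 one_pos 0 le_rfl
    rw [hint] at hdiv
    apply absurd hdiv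
    simp only [not_lt]
    have hterm : ∀ n : ℕ, (1 : ℝ≥0∞) ≤ w n * ENNReal.ofReal
        (Real.exp (1 * ‖z n‖) * Real.exp (0 * (z n).re)) := by
      intro n
      simp only [hw]
      rw [← ENNReal.ofReal_mul (Real.exp_pos _).le]
      have harg : Real.exp (-‖z n‖) *
          (Real.exp (1 * ‖z n‖) * Real.exp (0 * (z n).re)) = 1 := by
        have h0 : -‖z n‖ + (1 * ‖z n‖ + 0 * (z n).re) = 0 := by ring
        rw [← Real.exp_add, ← Real.exp_add, h0, Real.exp_zero]
      rw [harg]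
      simp
    calc (⊤ : ℝ≥0∞) = ∑' _ : ℕ, (1 : ℝ≥0∞) :=
          (ENNReal.tsum_const_eq_top_of_ne_zero one_ne_zero).symm
      _ ≤ _ := ENNReal.tsum_le_tsum hterm
end

section
/- Let β ≥ 1 and let S ⊆ ℂ be a Borel set such that for every b > 0 the set S ∖ 𝒫^β_b is unbounded. Then there exists a finite positive Borel measure ν on ℂ with ν(ℂ ∖ S) = 0 that has all exponential moments and satisfies ∫_ℂ e^(s·|λ|^(1/β)) dν(λ) = ∞ for every s > 0. -/
open MeasureTheory
open scoped ENNReal NNReal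

/-- Let `β ≥ 1` and let `S ⊆ ℂ` be a Borel set such that for every `b > 0` the set
`S \ 𝒫^β_b` is unbounded, where `𝒫^β_b = {λ : Re λ ≥ b·|Im λ|^(1/β)}`. Then there is a
finite positive Borel measure `ν` carried by `S` which has all exponential moments and
satisfies `∫ e^(s·|λ|^(1/β)) dν(λ) = ∞` for every `s > 0`. -/
theorem stmt_3 (β : ℝ) (hβ : 1 ≤ β) (S : Set ℂ) (hS : MeasurableSet S)
    (hub : ∀ b > (0 : ℝ),
      ¬ Bornology.IsBounded (S \ {z : ℂ | b * |z.im| ^ (1 / β) ≤ z.re})) :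
    ∃ ν : Measure ℂ, IsFiniteMeasure ν ∧ ν Sᶜ = 0 ∧
      (∀ t : ℝ, 0 ≤ t → ∫⁻ z, ENNReal.ofReal (Real.exp (t * z.re)) ∂ν < ⊤) ∧
      (∀ s > (0 : ℝ),
        ∫⁻ z, ENNReal.ofReal (Real.exp (s * ‖z‖ ^ (1 / β))) ∂ν = ⊤) := by
  have hβ0 : (0:ℝ) < β := lt_of_lt_of_le one_pos hβ
  have hβ0' : β ≠ 0 := ne_of_gt hβ0
  have hβinv : (0:ℝ) < 1 / β := by positivity
  -- Step 1 : choose points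
  have hch : ∀ n : ℕ, ∃ z : ℂ, z ∈ S ∧ z.re < (1/((n:ℝ)+1)) * |z.im| ^ (1/β) ∧
      ((n:ℝ)+1) ^ (2*β) ≤ ‖z‖ := by
    intro n
    have hb : (0:ℝ) < 1/((n:ℝ)+1) := by positivity
    have h := hub (1/((n:ℝ)+1)) hb
    rw [isBounded_iff_forall_norm_le] at h
    push_neg at h
    obtain ⟨z, hz, hznorm⟩ := h (((n:ℝ)+1) ^ (2*β))
    obtain ⟨hzS, hzP⟩ := hz
    simp only [Set.mem_setOf_eq, not_le] at hzP
    exact ⟨z, hzS, hzP, by exact hznorm.le⟩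
  choose f hfS hre hnorm using hch
  set A : ℕ → ℝ := fun n => ‖f n‖ ^ (1/β) with hA
  have hAnonneg : ∀ n, 0 ≤ A n := fun n => Real.rpow_nonneg (norm_nonneg _) _
  -- A n ≥ (n+1)^2
  have hA2 : ∀ n : ℕ, ((n:ℝ)+1)^2 ≤ A n := by
    intro n
    have h1 : (((n:ℝ)+1) ^ (2*β)) ^ (1/β) ≤ A n :=
      Real.rpow_le_rpow (by positivity) (hnorm n) hβinv.le
    calc ((n:ℝ)+1)^2 = ((n:ℝ)+1) ^ ((2:ℝ)) := by rw [← Real.rpow_natCast]; norm_num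
      _ = (((n:ℝ)+1) ^ (2*β)) ^ (1/β) := by
          rw [← Real.rpow_mul (by positivity)]
          congr 1
          field_simp
      _ ≤ A n := h1
  -- re bound
  have hre' : ∀ n, (f n).re ≤ A n / ((n:ℝ)+1) := by
    intro n
    have h1 : |(f n).im| ^ (1/β) ≤ A n :=
      Real.rpow_le_rpow (abs_nonneg _) (Complex.abs_im_le_norm _) hβinv.le
    have := (hre n).le
    calc (f n).re ≤ (1/((n:ℝ)+1)) * |(f n).im| ^ (1/β) := this
      _ ≤ (1/((n:ℝ)+1)) * A n := by
          apply mul_le_mul_of_nonneg_left h1 (by positivity)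
      _ = A n / ((n:ℝ)+1) := by ring
  -- weights
  set w : ℕ → ℝ := fun n => (2⁻¹:ℝ)^(n+1) * Real.exp (-(A n / Real.sqrt ((n:ℝ)+1))) with hw
  have hwpos : ∀ n, 0 < w n := fun n => by positivity
  have hwle : ∀ n, w n ≤ (2⁻¹:ℝ)^(n+1) := by
    intro n
    have : Real.exp (-(A n / Real.sqrt ((n:ℝ)+1))) ≤ 1 := by
      apply Real.exp_le_one_iff.2
      have : (0:ℝ) ≤ A n / Real.sqrt ((n:ℝ)+1) := by positivity
      linarith
    calc w n ≤ (2⁻¹:ℝ)^(n+1) * 1 := mul_le_mul_of_nonneg_left this (by positivity)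
      _ = (2⁻¹:ℝ)^(n+1) := mul_one _
  have hgeo : Summable (fun n : ℕ => (2⁻¹:ℝ)^(n+1)) := by
    have := summable_geometric_of_lt_one (r := (2⁻¹:ℝ)) (by norm_num) (by norm_num)
    simpa [pow_succ'] using this.mul_left (2⁻¹:ℝ)
  -- the measure
  set ν : Measure ℂ := Measure.sum (fun n => ENNReal.ofReal (w n) • Measure.dirac (f n)) with hν
  have hint : ∀ g : ℂ → ℝ≥0∞, ∫⁻ z, g z ∂ν = ∑' n, ENNReal.ofReal (w n) * g (f n) := by
    intro g
    rw [hν, lintegral_sum_measure]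
    congr 1
    ext n
    rw [lintegral_smul_measure, lintegral_dirac, smul_eq_mul]
  refine ⟨ν, ?_, ?_, ?_, ?_⟩
  · -- finite
    constructor
    have : ∫⁻ z, (1:ℝ≥0∞) ∂ν = ∑' n, ENNReal.ofReal (w n) * 1 := hint 1
    rw [← lintegral_one, this]
    simp only [mul_one]
    rw [← ENNReal.ofReal_tsum_of_nonneg (fun n => (hwpos n).le)
      (hgeo.of_nonneg_of_le (fun n => (hwpos n).le) hwle)]
    exact ENNReal.ofReal_lt_top
  · -- ν Sᶜ = 0
    rw [hν, Measure.sum_apply _ hS.compl]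
    refine ENNReal.tsum_eq_zero.2 fun n => ?_
    rw [Measure.smul_apply, Measure.dirac_apply]
    simp [Set.indicator_of_notMem, hfS n]
  · -- exponential moments
    intro t ht
    rw [hint]
    set u : ℕ → ℝ := fun n => w n * Real.exp (t * (f n).re) with hu
    have hunn : ∀ n, 0 ≤ u n := fun n => mul_nonneg (hwpos n).le (Real.exp_nonneg _)
    have hconv : ∀ n : ℕ, ENNReal.ofReal (w n) * ENNReal.ofReal (Real.exp (t * (f n).re))
        = ENNReal.ofReal (u n) := fun n => (ENNReal.ofReal_mul (hwpos n).le).symm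
    simp only [hconv]
    have key : ∀ n : ℕ, t ≤ Real.sqrt ((n:ℝ)+1) → u n ≤ (2⁻¹:ℝ)^(n+1) := by
      intro n hn
      have hs : (0:ℝ) < Real.sqrt ((n:ℝ)+1) := Real.sqrt_pos.2 (by positivity)
      have hsq : Real.sqrt ((n:ℝ)+1) * Real.sqrt ((n:ℝ)+1) = (n:ℝ)+1 :=
        Real.mul_self_sqrt (by positivity)
      have h1 : t * (f n).re ≤ t * (A n / ((n:ℝ)+1)) :=
        mul_le_mul_of_nonneg_left (hre' n) ht
      have h2 : t * (A n / ((n:ℝ)+1)) ≤ A n / Real.sqrt ((n:ℝ)+1) := by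
        calc t * (A n / ((n:ℝ)+1)) = (t / ((n:ℝ)+1)) * A n := by ring
          _ ≤ (1 / Real.sqrt ((n:ℝ)+1)) * A n := by
              apply mul_le_mul_of_nonneg_right _ (hAnonneg n)
              rw [div_le_div_iff₀ (by positivity) hs, one_mul]
              calc t * Real.sqrt ((n:ℝ)+1)
                  ≤ Real.sqrt ((n:ℝ)+1) * Real.sqrt ((n:ℝ)+1) :=
                    mul_le_mul_of_nonneg_right hn hs.le
                _ = (n:ℝ)+1 := hsq
          _ = A n / Real.sqrt ((n:ℝ)+1) := by ring
      have : u n = (2⁻¹:ℝ)^(n+1) * Real.exp (t * (f n).re - A n / Real.sqrt ((n:ℝ)+1)) := by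
        rw [hu, hw]
        simp only []
        rw [mul_assoc, ← Real.exp_add]
        ring_nf
      rw [this]
      calc (2⁻¹:ℝ)^(n+1) * Real.exp (t * (f n).re - A n / Real.sqrt ((n:ℝ)+1))
          ≤ (2⁻¹:ℝ)^(n+1) * 1 := by
            apply mul_le_mul_of_nonneg_left _ (by positivity)
            apply Real.exp_le_one_iff.2
            linarith
        _ = (2⁻¹:ℝ)^(n+1) := mul_one _
    have hsumu : Summable u := by
      set k : ℕ := ⌈t^2⌉₊ with hk
      rw [← summable_nat_add_iff k]
      refine Summable.of_nonneg_of_le (f := fun n : ℕ => (2⁻¹:ℝ)^(n + k + 1))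
        (fun n => hunn _) (fun n => ?_) ?_
      · apply key
        have h1 : t^2 ≤ (k:ℝ) := Nat.le_ceil _
        have h2 : (k:ℝ) ≤ ((n+k:ℕ):ℝ) + 1 := by push_cast; linarith [Nat.cast_nonneg (α := ℝ) n]
        calc t = Real.sqrt (t^2) := (Real.sqrt_sq ht).symm
          _ ≤ Real.sqrt (((n+k:ℕ):ℝ)+1) := Real.sqrt_le_sqrt (by linarith)
      · have : Summable (fun n : ℕ => (2⁻¹:ℝ)^(n+1) * (2⁻¹:ℝ)^k) := hgeo.mul_right _
        apply this.congr
        intro n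
        rw [← pow_add]
        ring_nf
    rw [← ENNReal.ofReal_tsum_of_nonneg hunn hsumu]
    exact ENNReal.ofReal_lt_top
  · -- divergence
    intro s hs
    rw [hint]
    set v : ℕ → ℝ := fun n => w n * Real.exp (s * A n) with hv
    have hconv : ∀ n : ℕ, ENNReal.ofReal (w n) *
        ENNReal.ofReal (Real.exp (s * ‖f n‖ ^ (1/β)))
        = ENNReal.ofReal (v n) := fun n => (ENNReal.ofReal_mul (hwpos n).le).symm
    simp only [hconv]
    set N : ℕ := ⌈max (4/s^2) (2*Real.log 2/s)⌉₊ with hN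
    have key : ∀ n : ℕ, N ≤ n → (1:ℝ) ≤ v n := by
      intro n hn
      have hn1 : max (4/s^2) (2*Real.log 2/s) ≤ (n:ℝ)+1 := by
        calc max (4/s^2) (2*Real.log 2/s) ≤ (N:ℝ) := Nat.le_ceil _
          _ ≤ (n:ℝ) := by exact_mod_cast hn
          _ ≤ (n:ℝ)+1 := by linarith
      have ha : 4/s^2 ≤ (n:ℝ)+1 := le_trans (le_max_left _ _) hn1
      have hb : 2*Real.log 2/s ≤ (n:ℝ)+1 := le_trans (le_max_right _ _) hn1
      have hnpos : (0:ℝ) < (n:ℝ)+1 := by positivity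
      have hsqpos : (0:ℝ) < Real.sqrt ((n:ℝ)+1) := Real.sqrt_pos.2 hnpos
      have hsq : Real.sqrt ((n:ℝ)+1) * Real.sqrt ((n:ℝ)+1) = (n:ℝ)+1 :=
        Real.mul_self_sqrt hnpos.le
      -- 1/sqrt(n+1) ≤ s/2
      have hss : 1 / Real.sqrt ((n:ℝ)+1) ≤ s/2 := by
        rw [div_le_div_iff₀ hsqpos (by norm_num)]
        -- 2 ≤ s * sqrt(n+1); since sqrt(n+1) ≥ 2/s
        have h4 : (2/s)^2 ≤ (n:ℝ)+1 := by
          have : (2/s)^2 = 4/s^2 := by field_simp; ring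
          linarith [this ▸ ha]
        have : 2/s ≤ Real.sqrt ((n:ℝ)+1) := by
          calc 2/s = Real.sqrt ((2/s)^2) := (Real.sqrt_sq (by positivity)).symm
            _ ≤ _ := Real.sqrt_le_sqrt h4
        have h5 : s * (2/s) ≤ s * Real.sqrt ((n:ℝ)+1) :=
          mul_le_mul_of_nonneg_left this hs.le
        have h6 : s * (2/s) = 2 := by field_simp
        nlinarith [h5, h6]
      -- the exponent bound
      have hexp : ((n:ℝ)+1) * Real.log 2 ≤ s * A n - A n / Real.sqrt ((n:ℝ)+1) := by
        have hAn : ((n:ℝ)+1)^2 ≤ A n := hA2 n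
        have h5 : A n / Real.sqrt ((n:ℝ)+1) = (1/Real.sqrt ((n:ℝ)+1)) * A n := by ring
        have h6 : (1/Real.sqrt ((n:ℝ)+1)) * A n ≤ (s/2) * A n :=
          mul_le_mul_of_nonneg_right hss (hAnonneg n)
        have h7 : (s/2) * ((n:ℝ)+1)^2 ≤ (s/2) * A n :=
          mul_le_mul_of_nonneg_left hAn (by positivity)
        have h8 : ((n:ℝ)+1) * Real.log 2 ≤ (s/2) * ((n:ℝ)+1)^2 := by
          have : Real.log 2 ≤ (s/2) * ((n:ℝ)+1) := by
            have h5 : s * (2*Real.log 2/s) ≤ s * ((n:ℝ)+1) :=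
              mul_le_mul_of_nonneg_left hb hs.le
            have h6 : s * (2*Real.log 2/s) = 2 * Real.log 2 := by field_simp
            nlinarith [h5, h6]
          calc ((n:ℝ)+1) * Real.log 2 ≤ ((n:ℝ)+1) * ((s/2)*((n:ℝ)+1)) :=
                mul_le_mul_of_nonneg_left this hnpos.le
            _ = (s/2) * ((n:ℝ)+1)^2 := by ring
        have : s * A n - A n / Real.sqrt ((n:ℝ)+1) ≥ s * A n - (s/2) * A n := by
          rw [h5]; linarith
        have h9 : s * A n - (s/2) * A n = (s/2) * A n := by ring
        linarith
      -- conclude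
      have hvn : v n = (2⁻¹:ℝ)^(n+1) * Real.exp (s * A n - A n / Real.sqrt ((n:ℝ)+1)) := by
        rw [hv, hw]
        simp only []
        rw [mul_assoc, ← Real.exp_add]
        ring_nf
      rw [hvn]
      have h2pow : Real.exp (((n:ℝ)+1) * Real.log 2) = 2^(n+1) := by
        have : ((n:ℝ)+1) = ((n+1:ℕ):ℝ) := by push_cast; ring
        rw [this, Real.exp_nat_mul, Real.exp_log (by norm_num : (0:ℝ) < 2)]
      have : (2:ℝ)^(n+1) ≤ Real.exp (s * A n - A n / Real.sqrt ((n:ℝ)+1)) := by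
        rw [← h2pow]
        exact Real.exp_le_exp.2 hexp
      calc (1:ℝ) = (2⁻¹:ℝ)^(n+1) * 2^(n+1) := by
            rw [← mul_pow]; norm_num
        _ ≤ (2⁻¹:ℝ)^(n+1) * Real.exp (s * A n - A n / Real.sqrt ((n:ℝ)+1)) :=
            mul_le_mul_of_nonneg_left this (by positivity)
    -- tsum is top
    refine top_le_iff.1 ?_
    have h1 : (⊤:ℝ≥0∞) = ∑' _ : ℕ, (1:ℝ≥0∞) :=
      (ENNReal.tsum_const_eq_top_of_ne_zero one_ne_zero).symm
    calc (⊤:ℝ≥0∞) = ∑' _ : ℕ, (1:ℝ≥0∞) := h1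
      _ ≤ ∑' n : ℕ, ENNReal.ofReal (v (n + N)) := by
          apply ENNReal.tsum_le_tsum
          intro n
          rw [show (1:ℝ≥0∞) = ENNReal.ofReal 1 by simp]
          exact ENNReal.ofReal_le_ofReal (key (n + N) (Nat.le_add_left _ _))
      _ ≤ ∑' n : ℕ, ENNReal.ofReal (v n) :=
          ENNReal.tsum_comp_le_tsum_of_injective (add_left_injective N) _
end

section
/- Let β ≥ 1 and let S ⊆ ℂ be a Borel set. Suppose that for every finite positive Borel measure ν on ℂ with ν(ℂ ∖ S) = 0 that has all exponential moments there exists some s > 0 with ∫_ℂ e^(s·|λ|^(1/β)) dν(λ) < ∞. Then for every such measure ν, every s > 0, and every t ≥ 0, ∫_ℂ e^(s·|λ|^(1/β)) · e^(t·Re λ) dν(λ) < ∞. -/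
open MeasureTheory Real
open scoped ENNReal

noncomputable def fd (β s t : ℝ) (z : ℂ) : ℝ≥0∞ :=
  ENNReal.ofReal (Real.exp (s * ‖z‖ ^ (1 / β)) * Real.exp (t * z.re))

lemma fd_meas (β s t : ℝ) : Measurable (fd β s t) := by
  unfold fd
  exact ((((continuous_norm.measurable.pow_const _).const_mul s).exp.mul
    ((Complex.measurable_re.const_mul t).exp)).ennreal_ofReal)

lemma fd_mono (β t : ℝ) {s₁ s₂ : ℝ} (hs : s₁ ≤ s₂) (z : ℂ) : fd β s₁ t z ≤ fd β s₂ t z := by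
  unfold fd
  apply ENNReal.ofReal_le_ofReal
  have hx : (0:ℝ) ≤ ‖z‖ ^ (1 / β) := Real.rpow_nonneg (norm_nonneg z) _
  exact mul_le_mul_of_nonneg_right
    (exp_le_exp.2 (mul_le_mul_of_nonneg_right hs hx)) (exp_pos _).le

lemma fd_mul_re (β s t u : ℝ) (z : ℂ) :
    fd β s t z * ENNReal.ofReal (Real.exp (u * z.re)) = fd β s (t + u) z := by
  unfold fd
  rw [← ENNReal.ofReal_mul (by positivity)]
  congr 1
  rw [mul_assoc, ← Real.exp_add, add_mul]

lemma fd_mul_abs (β s t u : ℝ) (z : ℂ) :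
    fd β s t z * ENNReal.ofReal (Real.exp (u * ‖z‖ ^ (1 / β))) = fd β (s + u) t z := by
  unfold fd
  rw [← ENNReal.ofReal_mul (by positivity)]
  congr 1
  rw [mul_right_comm, ← Real.exp_add, ← add_mul]

lemma lint_bound (β s : ℝ) (ν : Measure ℂ) {t T : ℝ} (ht : 0 ≤ t) (htT : t ≤ T) :
    ∫⁻ z, fd β s t z ∂ν ≤ ∫⁻ z, fd β s 0 z ∂ν + ∫⁻ z, fd β s T z ∂ν := by
  rw [← lintegral_add_left (fd_meas β s 0)]
  refine lintegral_mono fun z => ?_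
  unfold fd
  rw [← ENNReal.ofReal_add (by positivity) (by positivity)]
  apply ENNReal.ofReal_le_ofReal
  have h1 : exp (t * z.re) ≤ 1 + exp (T * z.re) := by
    rcases le_or_gt 0 z.re with hr | hr
    · have := exp_le_exp.2 (mul_le_mul_of_nonneg_right htT hr)
      linarith [exp_pos (T * z.re)]
    · have : t * z.re ≤ 0 := mul_nonpos_of_nonneg_of_nonpos ht hr.le
      have := exp_le_exp.2 this
      simp only [Real.exp_zero] at this
      linarith [exp_pos (T * z.re)]
  have h2 : (0:ℝ) < exp (s * ‖z‖ ^ (1 / β)) := exp_pos _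
  simp only [zero_mul, Real.exp_zero, mul_one]
  nlinarith

lemma bootstrap (β : ℝ) (S : Set ℂ) (hS : MeasurableSet S)
    (h : ∀ ν : Measure ℂ, IsFiniteMeasure ν → ν Sᶜ = 0 →
      (∀ t : ℝ, 0 ≤ t → ∫⁻ z, ENNReal.ofReal (Real.exp (t * z.re)) ∂ν < ⊤) →
      ∃ s > (0 : ℝ),
        ∫⁻ z, ENNReal.ofReal (Real.exp (s * ‖z‖ ^ (1 / β))) ∂ν < ⊤)
    (ν : Measure ℂ) (hnull : ν Sᶜ = 0) (sk : ℕ → ℝ)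
    (hsk : ∀ k, ∀ t : ℝ, 0 ≤ t → ∫⁻ z, fd β (sk k) t z ∂ν < ⊤) :
    ∃ δ > (0:ℝ), ∀ k n : ℕ, ∫⁻ z, fd β (sk k + δ) (n : ℝ) z ∂ν < ⊤ := by
  classical
  set L : ℕ → ℝ → ℝ≥0∞ := fun k u => ∫⁻ z, fd β (sk k) u z ∂ν with hL
  set N : ℕ × ℕ → ℝ≥0∞ := fun p => 1 + L p.1 0 + L p.1 (2 * ((p.1 : ℝ) + (p.2 : ℝ))) with hNdef
  have hN0 : ∀ p, N p ≠ 0 := by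
    intro p
    simp only [hNdef, ne_eq, add_eq_zero, one_ne_zero, false_and]
    exact not_false
  have hNtop : ∀ p, N p ≠ ⊤ := by
    intro p
    have h1 := hsk p.1 0 le_rfl
    have h2 := hsk p.1 (2 * ((p.1 : ℝ) + (p.2 : ℝ))) (by positivity)
    exact ENNReal.add_ne_top.2 ⟨ENNReal.add_ne_top.2 ⟨ENNReal.one_ne_top, h1.ne⟩, h2.ne⟩
  set c : ℕ × ℕ → ℝ≥0∞ := fun p => ((2:ℝ≥0∞) ^ p.1)⁻¹ * ((2:ℝ≥0∞) ^ p.2)⁻¹ * (N p)⁻¹ with hcdef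
  have hc_top : ∀ p, c p ≠ ⊤ := by
    intro p
    refine ENNReal.mul_ne_top (ENNReal.mul_ne_top ?_ ?_) ?_ <;>
      simp [ENNReal.inv_ne_top, hN0 p, pow_ne_zero]
  have hc_0 : ∀ p, c p ≠ 0 := by
    intro p
    simp only [hcdef, ne_eq, mul_eq_zero, ENNReal.inv_eq_zero, not_or]
    exact ⟨⟨by simp, by simp⟩, hNtop p⟩
  set μ : Measure ℂ := Measure.sum (fun p : ℕ × ℕ => c p • ν.withDensity (fd β (sk p.1) p.2)) with hμ
  have hint : ∀ F : ℂ → ℝ≥0∞, Measurable F →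
      ∫⁻ z, F z ∂μ = ∑' p : ℕ × ℕ, c p * ∫⁻ z, fd β (sk p.1) (p.2 : ℝ) z * F z ∂ν := by
    intro F hF
    rw [hμ, lintegral_sum_measure]
    refine tsum_congr fun p => ?_
    rw [lintegral_smul_measure, lintegral_withDensity_eq_lintegral_mul ν (fd_meas _ _ _) hF]
    rfl
  have hgeom : ∑' p : ℕ × ℕ, ((2:ℝ≥0∞) ^ p.1)⁻¹ * ((2:ℝ≥0∞) ^ p.2)⁻¹ < ⊤ := by
    rw [ENNReal.tsum_prod']
    have hg : ∑' n : ℕ, ((2:ℝ≥0∞) ^ n)⁻¹ = 2 := by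
      simp_rw [ENNReal.inv_pow]
      rw [ENNReal.tsum_geometric, ENNReal.one_sub_inv_two, inv_inv]
    simp_rw [ENNReal.tsum_mul_left, hg]
    rw [ENNReal.tsum_mul_right, hg]
    norm_num
  have hmomμ : ∀ t : ℝ, 0 ≤ t → ∫⁻ z, ENNReal.ofReal (Real.exp (t * z.re)) ∂μ < ⊤ := by
    intro t ht
    rw [hint _ ((Complex.measurable_re.const_mul t).exp.ennreal_ofReal)]
    have hrw : ∀ p : ℕ × ℕ, ∫⁻ z, fd β (sk p.1) (p.2 : ℝ) z * ENNReal.ofReal (Real.exp (t * z.re)) ∂ν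
        = L p.1 ((p.2 : ℝ) + t) := by
      intro p
      simp_rw [fd_mul_re]
      rfl
    simp_rw [hrw]
    obtain ⟨m, hm⟩ := exists_nat_ge t
    have key : ∀ p : ℕ × ℕ, c p * L p.1 ((p.2 : ℝ) + t)
        ≤ (if p ∈ Finset.range m ×ˢ Finset.range m then c p * L p.1 ((p.2 : ℝ) + t) else 0)
          + ((2:ℝ≥0∞) ^ p.1)⁻¹ * ((2:ℝ≥0∞) ^ p.2)⁻¹ := by
      intro p
      by_cases hp : p ∈ Finset.range m ×ˢ Finset.range m
      · rw [if_pos hp]; exact le_self_add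
      · rw [if_neg hp, zero_add]
        have hor : m ≤ p.1 ∨ m ≤ p.2 := by
          rcases Finset.mem_product.not.1 hp |> not_and_or.1 with h' | h' <;>
            simp only [Finset.mem_range, not_lt] at h'
          · exact Or.inl h'
          · exact Or.inr h'
        have hcase : (m : ℝ) ≤ (p.1 : ℝ) + (p.2 : ℝ) := by
          rcases hor with h' | h'
          · have : (m:ℝ) ≤ (p.1:ℝ) := Nat.cast_le.2 h'
            have h2 : (0:ℝ) ≤ (p.2:ℝ) := Nat.cast_nonneg _
            linarith
          · have : (m:ℝ) ≤ (p.2:ℝ) := Nat.cast_le.2 h'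
            have h2 : (0:ℝ) ≤ (p.1:ℝ) := Nat.cast_nonneg _
            linarith
        have hle : (p.2 : ℝ) + t ≤ 2 * ((p.1 : ℝ) + (p.2 : ℝ)) := by linarith
        have hLb : L p.1 ((p.2 : ℝ) + t) ≤ N p := by
          refine le_trans (lint_bound β (sk p.1) ν (by positivity) hle) ?_
          rw [hNdef]
          exact add_le_add_left (le_add_self) _
        calc c p * L p.1 ((p.2 : ℝ) + t) ≤ c p * N p := mul_le_mul_right hLb _
          _ = ((2:ℝ≥0∞) ^ p.1)⁻¹ * ((2:ℝ≥0∞) ^ p.2)⁻¹ * ((N p)⁻¹ * N p) := by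
              rw [hcdef]; ring
          _ = ((2:ℝ≥0∞) ^ p.1)⁻¹ * ((2:ℝ≥0∞) ^ p.2)⁻¹ := by
              rw [ENNReal.inv_mul_cancel (hN0 p) (hNtop p), mul_one]
    calc ∑' p : ℕ × ℕ, c p * L p.1 ((p.2 : ℝ) + t)
        ≤ ∑' p : ℕ × ℕ, ((if p ∈ Finset.range m ×ˢ Finset.range m
              then c p * L p.1 ((p.2 : ℝ) + t) else 0)
            + ((2:ℝ≥0∞) ^ p.1)⁻¹ * ((2:ℝ≥0∞) ^ p.2)⁻¹) := ENNReal.tsum_le_tsum key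
      _ = (∑' p : ℕ × ℕ, (if p ∈ Finset.range m ×ˢ Finset.range m
              then c p * L p.1 ((p.2 : ℝ) + t) else 0))
            + ∑' p : ℕ × ℕ, ((2:ℝ≥0∞) ^ p.1)⁻¹ * ((2:ℝ≥0∞) ^ p.2)⁻¹ := ENNReal.tsum_add
      _ < ⊤ := by
          refine ENNReal.add_lt_top.2 ⟨?_, hgeom⟩
          rw [tsum_eq_sum (s := Finset.range m ×ˢ Finset.range m) (fun b hb => if_neg hb)]
          refine ENNReal.sum_lt_top.2 fun p hp => ?_
          rw [if_pos hp]
          exact ENNReal.mul_lt_top (hc_top p).lt_top (hsk p.1 _ (by positivity))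
  have hfinμ : IsFiniteMeasure μ := by
    constructor
    have h0 := hmomμ 0 le_rfl
    simp only [zero_mul, Real.exp_zero, ENNReal.ofReal_one, lintegral_one] at h0
    exact h0
  have hnullμ : μ Sᶜ = 0 := by
    rw [hμ, Measure.sum_apply _ hS.compl]
    refine ENNReal.tsum_eq_zero.2 fun p => ?_
    rw [Measure.smul_apply, withDensity_apply _ hS.compl,
      setLIntegral_measure_zero _ _ hnull, smul_zero]
  obtain ⟨δ, hδpos, hδ⟩ := h μ hfinμ hnullμ hmomμ
  refine ⟨δ, hδpos, fun k n => ?_⟩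
  rw [hint _ ((((continuous_norm.measurable.pow_const _).const_mul δ).exp).ennreal_ofReal)] at hδ
  have hrw2 : ∀ p : ℕ × ℕ,
      ∫⁻ z, fd β (sk p.1) (p.2 : ℝ) z * ENNReal.ofReal (Real.exp (δ * ‖z‖ ^ (1 / β))) ∂ν
        = ∫⁻ z, fd β (sk p.1 + δ) (p.2 : ℝ) z ∂ν := by
    intro p
    simp_rw [fd_mul_abs]
  simp_rw [hrw2] at hδ
  have hterm := ENNReal.ne_top_of_tsum_ne_top hδ.ne (k, n)
  by_contra htop
  rw [not_lt, top_le_iff] at htop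
  rw [htop, ENNReal.mul_top (hc_0 (k, n))] at hterm
  exact hterm rfl


/-- Smoothness improvement ("jump") effect at the measure level: let `β ≥ 1` and `S ⊆ ℂ`
Borel. If every finite positive Borel measure `ν` carried by `S` with all exponential
moments satisfies `∫ e^(s·|λ|^(1/β)) dν < ∞` for SOME `s > 0`, then every such measure
satisfies `∫ e^(s·|λ|^(1/β)) · e^(t·Re λ) dν < ∞` for ALL `s > 0` and `t ≥ 0`. -/
theorem stmt_4 (β : ℝ) (hβ : 1 ≤ β) (S : Set ℂ) (hS : MeasurableSet S)
    (h : ∀ ν : Measure ℂ, IsFiniteMeasure ν → ν Sᶜ = 0 →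
      (∀ t : ℝ, 0 ≤ t → ∫⁻ z, ENNReal.ofReal (Real.exp (t * z.re)) ∂ν < ⊤) →
      ∃ s > (0 : ℝ),
        ∫⁻ z, ENNReal.ofReal (Real.exp (s * ‖z‖ ^ (1 / β))) ∂ν < ⊤) :
    ∀ ν : Measure ℂ, IsFiniteMeasure ν → ν Sᶜ = 0 →
      (∀ t : ℝ, 0 ≤ t → ∫⁻ z, ENNReal.ofReal (Real.exp (t * z.re)) ∂ν < ⊤) →
      ∀ s > (0 : ℝ), ∀ t ≥ (0 : ℝ),
        ∫⁻ z, ENNReal.ofReal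
          (Real.exp (s * ‖z‖ ^ (1 / β)) * Real.exp (t * z.re)) ∂ν < ⊤ := by
  intro ν hfin hnull hmom
  by_contra hcon
  push_neg at hcon
  obtain ⟨sb, hsb, tb, htb, hbad⟩ := hcon
  have hbad' : ¬ ∫⁻ z, fd β sb tb z ∂ν < ⊤ := by rw [not_lt, top_le_iff]; exact le_antisymm le_top hbad
  set B : Set ℝ := {x : ℝ | ∀ t : ℝ, 0 ≤ t → ∫⁻ z, fd β x t z ∂ν < ⊤} with hB
  have hB0 : (0:ℝ) ∈ B := by
    intro t ht
    have : ∀ z : ℂ, fd β 0 t z = ENNReal.ofReal (Real.exp (t * z.re)) := by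
      intro z; unfold fd; rw [zero_mul, Real.exp_zero, one_mul]
    simp_rw [this]
    exact hmom t ht
  have hBdown : ∀ a b : ℝ, a ≤ b → b ∈ B → a ∈ B := by
    intro a b hab hb t ht
    exact lt_of_le_of_lt (lintegral_mono (fd_mono β t hab)) (hb t ht)
  have hBub : sb ∈ upperBounds B := by
    intro b hb
    by_contra hlt
    push_neg at hlt
    exact hbad' (hBdown sb b hlt.le hb tb htb)
  have hBne : B.Nonempty := ⟨0, hB0⟩
  set τ : ℝ := sSup B with hτ
  set sk : ℕ → ℝ := fun k => τ - 1 / (k + 1) with hsk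
  have hskB : ∀ k, sk k ∈ B := by
    intro k
    have hlt : sk k < τ := by
      rw [hsk]
      have : (0:ℝ) < 1 / ((k:ℝ) + 1) := by positivity
      linarith
    obtain ⟨b, hbB, hb⟩ := exists_lt_of_lt_csSup hBne hlt
    exact hBdown _ b hb.le hbB
  obtain ⟨δ, hδpos, hδ⟩ := bootstrap β S hS h ν hnull sk (fun k => hskB k)
  obtain ⟨K, hK⟩ := exists_nat_one_div_lt hδpos
  have hmemB : sk K + δ ∈ B := by
    intro t ht
    obtain ⟨n, hn⟩ := exists_nat_ge t
    refine lt_of_le_of_lt (lint_bound β (sk K + δ) ν ht hn) ?_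
    have h0 : ∫⁻ z, fd β (sk K + δ) ((0:ℕ) : ℝ) z ∂ν < ⊤ := hδ K 0
    rw [Nat.cast_zero] at h0
    exact ENNReal.add_lt_top.2 ⟨h0, hδ K n⟩
  have hle : sk K + δ ≤ τ := le_csSup ⟨sb, hBub⟩ hmemB
  rw [hsk] at hle
  simp only at hle
  linarith
end

section
/- Let β ≥ 1 and b > 0 be real numbers and let λ ∈ ℂ satisfy Re λ ≥ 1 and Re λ ≥ b·|Im λ|^(1/β). Then |λ|^(1/β) ≤ (1 + b^(−β))^(1/β) · Re λ; consequently, for all s ≥ 0 and t ≥ 0, e^(s·|λ|^(1/β)) · e^(t·Re λ) ≤ e^((s·(1 + b^(−β))^(1/β) + t)·Re λ). -/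
/-- Pointwise estimate on `𝒫^β_b ∩ {Re λ ≥ 1}`: if `β ≥ 1`, `b > 0`, `Re λ ≥ 1` and
`Re λ ≥ b·|Im λ|^(1/β)`, then `|λ|^(1/β) ≤ (1 + b^(−β))^(1/β)·Re λ`, and consequently,
for all `s, t ≥ 0`,
`e^(s·|λ|^(1/β)) · e^(t·Re λ) ≤ e^((s·(1 + b^(−β))^(1/β) + t)·Re λ)`. -/
theorem stmt_5 (β b : ℝ) (hβ : 1 ≤ β) (hb : 0 < b) (z : ℂ)
    (h1 : 1 ≤ z.re) (h2 : b * |z.im| ^ (1 / β) ≤ z.re) :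
    ‖z‖ ^ (1 / β) ≤ (1 + b ^ (-β)) ^ (1 / β) * z.re ∧
    ∀ s t : ℝ, 0 ≤ s → 0 ≤ t →
      Real.exp (s * ‖z‖ ^ (1 / β)) * Real.exp (t * z.re) ≤
        Real.exp ((s * (1 + b ^ (-β)) ^ (1 / β) + t) * z.re) := by
  have hβ0 : 0 < β := by linarith
  have hr0 : (0:ℝ) < z.re := by linarith
  have him : |z.im| ≤ b ^ (-β) * z.re ^ β := by
    have h3 : |z.im| ^ (1 / β) ≤ z.re / b := by
      rw [le_div_iff₀' hb]; exact h2
    have h4 : (|z.im| ^ (1 / β)) ^ β ≤ (z.re / b) ^ β :=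
      Real.rpow_le_rpow (Real.rpow_nonneg (abs_nonneg _) _) h3 hβ0.le
    rw [← Real.rpow_mul (abs_nonneg _), one_div_mul_cancel hβ0.ne', Real.rpow_one] at h4
    calc |z.im| ≤ (z.re / b) ^ β := h4
        _ = b ^ (-β) * z.re ^ β := by
          rw [Real.div_rpow hr0.le hb.le, Real.rpow_neg hb.le]
          ring
  have habs : ‖z‖ ≤ (1 + b ^ (-β)) * z.re ^ β := by
    have h5 : ‖z‖ ≤ |z.re| + |z.im| := Complex.norm_le_abs_re_add_abs_im z
    have h6 : z.re ≤ z.re ^ β := by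
      calc z.re = z.re ^ (1:ℝ) := (Real.rpow_one _).symm
        _ ≤ z.re ^ β := Real.rpow_le_rpow_of_exponent_le h1 hβ
    rw [abs_of_pos hr0] at h5
    nlinarith
  have key : ‖z‖ ^ (1 / β) ≤ (1 + b ^ (-β)) ^ (1 / β) * z.re := by
    have hpos : (0:ℝ) ≤ 1 + b ^ (-β) := by positivity
    calc ‖z‖ ^ (1 / β) ≤ ((1 + b ^ (-β)) * z.re ^ β) ^ (1 / β) :=
          Real.rpow_le_rpow (norm_nonneg z) habs (by positivity)
      _ = (1 + b ^ (-β)) ^ (1 / β) * z.re := by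
          rw [Real.mul_rpow hpos (by positivity), ← Real.rpow_mul hr0.le,
            mul_one_div_cancel hβ0.ne', Real.rpow_one]
  refine ⟨key, fun s t hs ht => ?_⟩
  rw [← Real.exp_add, Real.exp_le_exp]
  have := mul_le_mul_of_nonneg_left key hs
  nlinarith
end
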